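/- (Van Hamme) For every positive integer n: sum_{i=1}^n [n choose i]_q * (-1)^{i-1} q^{binom(i+1,2)} / (1-q^i) = sum_{i=1}^n q^i/(1-q^i). -/
import Mathlib


open Finset

variable {F : Type*} [Field F]

/-- `(q;q)_n = (1-q)(1-q^2)...(1-q^n)` -/
def qfac (q : F) (n : ℕ) : F := ∏ j ∈ Finset.range n, (1 - q ^ (j + 1))

/-- `(z;q)_k = (1-z)(1-zq)...(1-zq^{k-1})` -/
def qpoch (z q : F) (k : ℕ) : F := ∏ j ∈ Finset.range k, (1 - z * q ^ j)

/-- Gaussian binomial coefficient `[n choose k]_q` -/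
def qbinom (q : F) (n k : ℕ) : F := qfac q n / (qfac q k * qfac q (n - k))

/-- Sum over weakly increasing `m`-tuples `lo ≤ i_1 ≤ ... ≤ i_m ≤ n` of
`∏_j q^{i_j}/(1-q^{i_j})` (equal to `1` when `m = 0`). -/
def chainSum (q : F) (lo n m : ℕ) : F :=
  ∑ c ∈ Finset.univ.filter (fun c : Fin m → Fin (n + 1) =>
      (∀ j k : Fin m, j ≤ k → c j ≤ c k) ∧ ∀ j, lo ≤ (c j : ℕ)),
    ∏ j, q ^ (c j : ℕ) / (1 - q ^ (c j : ℕ))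

/-- Complete homogeneous symmetric function `h_m` of the variables
`x lo, x (lo+1), ..., x n`. -/
def hSum {R : Type*} [CommRing R] (x : ℕ → R) (lo n m : ℕ) : R :=
  ∑ c ∈ Finset.univ.filter (fun c : Fin m → Fin (n + 1) =>
      (∀ j k : Fin m, j ≤ k → c j ≤ c k) ∧ ∀ j, lo ≤ (c j : ℕ)),
    ∏ j, x (c j : ℕ)
lemma qfac_succ (q : F) (n : ℕ) : qfac q (n + 1) = qfac q n * (1 - q ^ (n + 1)) := by
  simp [qfac, Finset.prod_range_succ]

lemma one_sub_pow_ne {q : F} {n : ℕ} (hq : ∀ i ∈ Finset.Icc 1 n, q ^ i ≠ 1)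
    {i : ℕ} (h1 : 1 ≤ i) (h2 : i ≤ n) : (1 : F) - q ^ i ≠ 0 := fun h =>
  hq i (Finset.mem_Icc.2 ⟨h1, h2⟩) (sub_eq_zero.mp h).symm

lemma qfac_ne_zero {q : F} {n : ℕ} (hq : ∀ i ∈ Finset.Icc 1 n, q ^ i ≠ 1) :
    qfac q n ≠ 0 := by
  unfold qfac
  rw [Finset.prod_ne_zero_iff]
  intro j hj
  exact one_sub_pow_ne hq (Nat.succ_le_succ (Nat.zero_le j)) (Finset.mem_range.mp hj)

lemma qbinom_zero {q : F} {n : ℕ} (h : qfac q n ≠ 0) : qbinom q n 0 = 1 := by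
  unfold qbinom
  rw [Nat.sub_zero, show qfac q 0 = 1 by simp [qfac], one_mul, div_self h]

lemma qbinom_self {q : F} {n : ℕ} (h : qfac q n ≠ 0) : qbinom q n n = 1 := by
  unfold qbinom
  rw [Nat.sub_self, show qfac q 0 = 1 by simp [qfac], mul_one, div_self h]

lemma qbinom_pascal (q : F) (j d : ℕ)
    (hq : ∀ i ∈ Finset.Icc 1 (j + d + 2), q ^ i ≠ 1) :
    qbinom q (j + d + 2) (j + 1)
      = qbinom q (j + d + 1) (j + 1) + q ^ (d + 1) * qbinom q (j + d + 1) j := by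
  have hqj : ∀ i ∈ Finset.Icc 1 j, q ^ i ≠ 1 := fun i hi =>
    hq i (by simp only [Finset.mem_Icc] at hi ⊢; omega)
  have hqd : ∀ i ∈ Finset.Icc 1 d, q ^ i ≠ 1 := fun i hi =>
    hq i (by simp only [Finset.mem_Icc] at hi ⊢; omega)
  have hqm : ∀ i ∈ Finset.Icc 1 (j + d + 1), q ^ i ≠ 1 := fun i hi =>
    hq i (by simp only [Finset.mem_Icc] at hi ⊢; omega)
  have haj := qfac_ne_zero hqj
  have had := qfac_ne_zero hqd
  have ham := qfac_ne_zero hqm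
  have hj1 : (1 : F) - q ^ (j + 1) ≠ 0 := one_sub_pow_ne hq (by omega) (by omega)
  have hd1 : (1 : F) - q ^ (d + 1) ≠ 0 := one_sub_pow_ne hq (by omega) (by omega)
  have e1 : qfac q (j + d + 2) = qfac q (j + d + 1) * (1 - q ^ (j + d + 2)) := by
    rw [show j + d + 2 = j + d + 1 + 1 from by omega]
    exact qfac_succ q (j + d + 1)
  unfold qbinom
  rw [show j + d + 2 - (j + 1) = d + 1 from by omega,
    show j + d + 1 - (j + 1) = d from by omega,
    show j + d + 1 - j = d + 1 from by omega,
    e1, qfac_succ q j, qfac_succ q d]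
  field_simp
  ring

lemma choose_two_succ (k : ℕ) : (k + 1 + 1).choose 2 = (k + 1) + (k + 1).choose 2 := by
  rw [Nat.choose_succ_succ, Nat.choose_one_right]

lemma keyU (q : F) (m : ℕ) : ∀ r : ℕ, 1 ≤ r → (∀ i ∈ Finset.Icc 1 (m + r), q ^ i ≠ 1) →
    ∑ k ∈ Finset.range (m + 1),
        (-1 : F) ^ k * qbinom q m k * q ^ ((k + 1).choose 2) / (1 - q ^ (k + r))
      = qfac q m / ∏ j ∈ Finset.range (m + 1), (1 - q ^ (r + j)) := by
  induction m with
  | zero =>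
    intro r hr hq
    simp [qbinom, qfac]
  | succ m ih =>
    intro r hr hq
    have hqm : ∀ i ∈ Finset.Icc 1 (m + r), q ^ i ≠ 1 := fun i hi =>
      hq i (by simp only [Finset.mem_Icc] at hi ⊢; omega)
    have hqm1 : ∀ i ∈ Finset.Icc 1 (m + (r + 1)), q ^ i ≠ 1 := fun i hi =>
      hq i (by simp only [Finset.mem_Icc] at hi ⊢; omega)
    have hqn : ∀ i ∈ Finset.Icc 1 m, q ^ i ≠ 1 := fun i hi =>
      hq i (by simp only [Finset.mem_Icc] at hi ⊢; omega)
    have hqn1 : ∀ i ∈ Finset.Icc 1 (m + 1), q ^ i ≠ 1 := fun i hi =>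
      hq i (by simp only [Finset.mem_Icc] at hi ⊢; omega)
    have hfm := qfac_ne_zero hqn
    have hfm1 := qfac_ne_zero hqn1
    have split : ∀ k ∈ Finset.range (m + 2),
        (-1 : F) ^ k * qbinom q (m + 1) k * q ^ ((k + 1).choose 2) / (1 - q ^ (k + r))
        = (if k < m + 1 then
            (-1 : F) ^ k * qbinom q m k * q ^ ((k + 1).choose 2) / (1 - q ^ (k + r)) else 0)
          + (if k = 0 then 0 else
            (-q ^ (m + 1)) * ((-1 : F) ^ (k - 1) * qbinom q m (k - 1)
              * q ^ ((k - 1 + 1).choose 2) / (1 - q ^ (k - 1 + (r + 1))))) := by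
      intro k hk
      have hk2 : k < m + 2 := Finset.mem_range.mp hk
      rcases Nat.eq_zero_or_pos k with hk0 | hk1
      · subst hk0
        rw [if_pos (by omega), if_pos rfl, qbinom_zero hfm, qbinom_zero hfm1, add_zero]
      · obtain ⟨j, rfl⟩ : ∃ j, k = j + 1 := ⟨k - 1, by omega⟩
        rcases Nat.lt_or_ge (j + 1) (m + 1) with hlt | hge
        · rw [if_pos hlt, if_neg (Nat.succ_ne_zero j), Nat.add_sub_cancel]
          obtain ⟨d, rfl⟩ : ∃ d, m = j + d + 1 := ⟨m - j - 1, by omega⟩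
          have hp := qbinom_pascal q j d (by
            intro i hi
            exact hq i (by simp only [Finset.mem_Icc] at hi ⊢; omega))
          rw [show j + d + 1 + 1 = j + d + 2 from by omega] at *
          rw [hp, choose_two_succ j,
            show j + (r + 1) = j + 1 + r from by omega,
            show (j + d + 2 : ℕ) = (j + 1) + (d + 1) from by omega]
          rw [pow_add, pow_add q (j+1) ((j+1).choose 2)]
          ring
        · rw [if_neg (show ¬(j + 1 < m + 1) from by omega), if_neg (Nat.succ_ne_zero j),
            Nat.add_sub_cancel, zero_add]
          have hj : j = m + 1 - 1 := by omega
          have hjm : j = m := by omega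
          subst hjm
          rw [qbinom_self hfm1, qbinom_self hfm, choose_two_succ j,
            show j + (r + 1) = j + 1 + r from by omega, pow_add]
          ring
    rw [Finset.sum_congr rfl split, Finset.sum_add_distrib]
    have s1 : ∑ k ∈ Finset.range (m + 2),
        (if k < m + 1 then
          (-1 : F) ^ k * qbinom q m k * q ^ ((k + 1).choose 2) / (1 - q ^ (k + r)) else 0)
        = ∑ k ∈ Finset.range (m + 1),
          (-1 : F) ^ k * qbinom q m k * q ^ ((k + 1).choose 2) / (1 - q ^ (k + r)) := by
      rw [Finset.sum_range_succ, if_neg (lt_irrefl (m + 1)), add_zero]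
      exact Finset.sum_congr rfl fun k hk => if_pos (Finset.mem_range.mp hk)
    have s2 : ∑ k ∈ Finset.range (m + 2),
        (if k = 0 then 0 else
          (-q ^ (m + 1)) * ((-1 : F) ^ (k - 1) * qbinom q m (k - 1)
            * q ^ ((k - 1 + 1).choose 2) / (1 - q ^ (k - 1 + (r + 1)))))
        = (-q ^ (m + 1)) * ∑ k ∈ Finset.range (m + 1),
          (-1 : F) ^ k * qbinom q m k * q ^ ((k + 1).choose 2) / (1 - q ^ (k + (r + 1))) := by
      rw [Finset.sum_range_succ' _ (m + 1), if_pos rfl, add_zero, Finset.mul_sum]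
      exact Finset.sum_congr rfl fun k hk => by
        rw [if_neg (Nat.succ_ne_zero k), Nat.add_sub_cancel]
    rw [s1, s2, ih r hr hqm, ih (r + 1) (by omega) hqm1]
    -- final algebra
    have hr0 : (1 : F) - q ^ r ≠ 0 := one_sub_pow_ne hq (by omega) (by omega)
    have htop : (1 : F) - q ^ (r + (m + 1)) ≠ 0 := one_sub_pow_ne hq (by omega) (by omega)
    have hP1 : (∏ j ∈ Finset.range (m + 1), (1 - q ^ (r + j))) ≠ 0 := by
      rw [Finset.prod_ne_zero_iff]
      intro j hj
      exact one_sub_pow_ne hq (by omega) (by have := Finset.mem_range.mp hj; omega)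
    have hP2 : (∏ j ∈ Finset.range (m + 1), (1 - q ^ (r + 1 + j))) ≠ 0 := by
      rw [Finset.prod_ne_zero_iff]
      intro j hj
      exact one_sub_pow_ne hq (by omega) (by have := Finset.mem_range.mp hj; omega)
    have key : (∏ j ∈ Finset.range (m + 1), (1 - q ^ (r + j))) * (1 - q ^ (r + (m + 1)))
        = (1 - q ^ r) * ∏ j ∈ Finset.range (m + 1), (1 - q ^ (r + 1 + j)) := by
      rw [← Finset.prod_range_succ (fun j => 1 - q ^ (r + j)) (m + 1),
        Finset.prod_range_succ' (fun j => 1 - q ^ (r + j)) (m + 1)]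
      rw [add_zero, mul_comm]
      congr 1
      exact Finset.prod_congr rfl fun j _ => by rw [show r + (j + 1) = r + 1 + j from by omega]
    rw [Finset.prod_range_succ (fun j => 1 - q ^ (r + j)) (m + 1), qfac_succ]
    have hP1eq : (∏ j ∈ Finset.range (m + 1), (1 - q ^ (r + j)))
        = (1 - q ^ r) * (∏ j ∈ Finset.range (m + 1), (1 - q ^ (r + 1 + j)))
          / (1 - q ^ (r + (m + 1))) := by
      rw [eq_div_iff htop]; exact key
    rw [key, hP1eq]
    field_simp
    ring

lemma sum_Icc_one (f : ℕ → F) (n : ℕ) :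
    ∑ i ∈ Finset.Icc 1 n, f i = ∑ k ∈ Finset.range n, f (k + 1) := by
  induction n with
  | zero => simp
  | succ n ih =>
    rw [Finset.sum_Icc_succ_top (by omega), Finset.sum_range_succ, ih]

lemma mainAux (q : F) (n : ℕ) (hq : ∀ i ∈ Finset.Icc 1 n, q ^ i ≠ 1) :
    ∑ k ∈ Finset.range n,
        qbinom q n (k + 1) * ((-1 : F) ^ (k + 1 + 1) * q ^ ((k + 1 + 1).choose 2))
          / (1 - q ^ (k + 1))
      = ∑ k ∈ Finset.range n, q ^ (k + 1) / (1 - q ^ (k + 1)) := by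
  induction n with
  | zero => simp
  | succ n ih =>
    have hqn : ∀ i ∈ Finset.Icc 1 n, q ^ i ≠ 1 := fun i hi =>
      hq i (by simp only [Finset.mem_Icc] at hi ⊢; omega)
    have hfn := qfac_ne_zero hqn
    have hfn1 := qfac_ne_zero hq
    have split : ∀ k ∈ Finset.range (n + 1),
        qbinom q (n + 1) (k + 1) * ((-1 : F) ^ (k + 1 + 1) * q ^ ((k + 1 + 1).choose 2))
          / (1 - q ^ (k + 1))
        = (if k < n then
            qbinom q n (k + 1) * ((-1 : F) ^ (k + 1 + 1) * q ^ ((k + 1 + 1).choose 2))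
              / (1 - q ^ (k + 1)) else 0)
          + q ^ (n + 1) * ((-1 : F) ^ k * qbinom q n k * q ^ ((k + 1).choose 2)
              / (1 - q ^ (k + 1))) := by
      intro k hk
      have hk2 : k < n + 1 := Finset.mem_range.mp hk
      rcases Nat.lt_or_ge k n with hlt | hge
      · rw [if_pos hlt]
        obtain ⟨d, rfl⟩ : ∃ d, n = k + d + 1 := ⟨n - k - 1, by omega⟩
        have hp := qbinom_pascal q k d (by
          intro i hi
          exact hq i (by simp only [Finset.mem_Icc] at hi ⊢; omega))
        rw [show k + d + 1 + 1 = k + d + 2 from by omega] at *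
        rw [hp, choose_two_succ k,
          show (k + d + 2 : ℕ) = (k + 1) + (d + 1) from by omega]
        rw [pow_add, pow_add q (k + 1) ((k + 1).choose 2)]
        ring
      · have hkn : k = n := by omega
        subst hkn
        rw [if_neg (lt_irrefl k), qbinom_self hfn1, qbinom_self hfn, choose_two_succ k,
          pow_add]
        ring
    rw [Finset.sum_congr rfl split, Finset.sum_add_distrib]
    have s1 : ∑ k ∈ Finset.range (n + 1),
        (if k < n then
          qbinom q n (k + 1) * ((-1 : F) ^ (k + 1 + 1) * q ^ ((k + 1 + 1).choose 2))
            / (1 - q ^ (k + 1)) else 0)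
        = ∑ k ∈ Finset.range n,
          qbinom q n (k + 1) * ((-1 : F) ^ (k + 1 + 1) * q ^ ((k + 1 + 1).choose 2))
            / (1 - q ^ (k + 1)) := by
      rw [Finset.sum_range_succ, if_neg (lt_irrefl n), add_zero]
      exact Finset.sum_congr rfl fun k hk => if_pos (Finset.mem_range.mp hk)
    have s2 : ∑ k ∈ Finset.range (n + 1),
        q ^ (n + 1) * ((-1 : F) ^ k * qbinom q n k * q ^ ((k + 1).choose 2)
          / (1 - q ^ (k + 1)))
        = q ^ (n + 1) / (1 - q ^ (n + 1)) := by
      rw [← Finset.mul_sum, keyU q n 1 le_rfl (by simpa using hq)]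
      have hprod : (∏ j ∈ Finset.range (n + 1), (1 - q ^ (1 + j))) = qfac q (n + 1) := by
        unfold qfac
        exact Finset.prod_congr rfl fun j _ => by rw [Nat.add_comm 1 j]
      rw [hprod, qfac_succ, div_mul_eq_div_div, div_self hfn, one_div, mul_comm,
        inv_mul_eq_div]
    rw [s1, s2, ih hqn, Finset.sum_range_succ]


theorem van_hamme (q : F) (n : ℕ) (hn : 1 ≤ n)
    (hq : ∀ i ∈ Finset.Icc 1 n, q ^ i ≠ 1) :
    ∑ i ∈ Finset.Icc 1 n,
        qbinom q n i * ((-1) ^ (i + 1) * q ^ ((i + 1).choose 2)) / (1 - q ^ i)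
      = ∑ i ∈ Finset.Icc 1 n, q ^ i / (1 - q ^ i) := by
  rw [sum_Icc_one (fun i => qbinom q n i * ((-1) ^ (i + 1) * q ^ ((i + 1).choose 2))
      / (1 - q ^ i)) n,
    sum_Icc_one (fun i => q ^ i / (1 - q ^ i)) n]
  exact mainAux q n hq
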